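/- The map g : Δ → ℂ² defined on the unit disk Δ = {w ∈ ℂ : |w| < 1} by g(w) = ( (1/2)·(exp((w+1)/(w-1)) + exp(√2·(w+1)/(w-1))), (1/2)·(exp(√3·(w+1)/(w-1)) + exp(√5·(w+1)/(w-1))) ) is holomorphic on Δ, takes values in the bidisk Δ² = {(v₁,v₂) ∈ ℂ² : |v₁| < 1 and |v₂| < 1}, and its image g(Δ) is dense in Δ². -/

import Mathlib

open Complex

private lemma notSquare (n k0 : ℕ) (hlt : n < (k0+1)*(k0+1)) (h : ∀ k ≤ k0, k*k ≠ n) :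
    ¬ IsSquare n := by
  rintro ⟨k, hk⟩
  rcases le_or_gt k k0 with h' | h'
  · exact h k h' hk.symm
  · nlinarith

private lemma irr_sqrt_nat (n : ℕ) (h : ¬IsSquare n) : Irrational (Real.sqrt n) :=
  irrational_sqrt_natCast_iff.2 h

private lemma lin2 {m : ℝ} (hm : Irrational m) {a b : ℚ} (h : (a : ℝ) + b * m = 0) :
    a = 0 ∧ b = 0 := by
  rcases eq_or_ne b 0 with hb | hb
  · subst hb; refine ⟨?_, rfl⟩; exact_mod_cast by simpa using h
  · exfalso
    have hb' : (b : ℝ) ≠ 0 := by exact_mod_cast hb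
    have hm' : m = ((-a / b : ℚ) : ℝ) := by
      push_cast
      field_simp
      linarith [h]
    exact hm ⟨-a / b, hm'.symm⟩

private lemma lin3 (m n : ℕ) (hm : Irrational (Real.sqrt m)) (hn : Irrational (Real.sqrt n))
    (hmn : Irrational (Real.sqrt m * Real.sqrt n)) (p q r : ℚ)
    (h : (p : ℝ) + q * Real.sqrt m + r * Real.sqrt n = 0) : p = 0 ∧ q = 0 ∧ r = 0 := by
  have sqm : Real.sqrt m * Real.sqrt m = (m:ℝ) := Real.mul_self_sqrt (by positivity)
  have sqn : Real.sqrt n * Real.sqrt n = (n:ℝ) := Real.mul_self_sqrt (by positivity)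
  have h1 : (q : ℝ) * Real.sqrt m = -((p:ℝ) + r * Real.sqrt n) := by linarith
  have hsq : ((q:ℝ) * Real.sqrt m) * ((q:ℝ) * Real.sqrt m)
      = ((p:ℝ) + r * Real.sqrt n) * ((p:ℝ) + r * Real.sqrt n) := by rw [h1]; ring
  have h2 : ((q^2 * m - p^2 - r^2 * n : ℚ) : ℝ) + ((-(2 * p * r) : ℚ) : ℝ) * Real.sqrt n = 0 := by
    push_cast
    linear_combination hsq - (q:ℝ)^2 * sqm + (r:ℝ)^2 * sqn
  obtain ⟨hA, hB⟩ := lin2 hn h2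
  have hpr : p * r = 0 := by linarith [hB]
  rcases mul_eq_zero.mp hpr with hp | hr
  · subst hp
    have h3 : ((q * m : ℚ) : ℝ) + ((r : ℚ) : ℝ) * (Real.sqrt m * Real.sqrt n) = 0 := by
      push_cast
      push_cast at h
      linear_combination h * Real.sqrt m - (q:ℝ) * sqm
    obtain ⟨hqm, hr⟩ := lin2 hmn h3
    have hm0' : (m : ℚ) ≠ 0 := by
      intro hc
      apply hm
      have hmz : m = 0 := by exact_mod_cast hc
      subst hmz
      exact ⟨0, by simp⟩
    refine ⟨rfl, ?_, hr⟩
    rcases mul_eq_zero.mp hqm with h' | h'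
    · exact h'
    · exact absurd h' hm0'
  · subst hr
    have h4 : (p : ℝ) + q * Real.sqrt m = 0 := by
      push_cast at h; linarith
    obtain ⟨hp, hq⟩ := lin2 hm h4
    exact ⟨hp, hq, rfl⟩

private lemma irr2 : Irrational (Real.sqrt 2) := by
  have := irr_sqrt_nat 2 (notSquare 2 1 (by norm_num) (by decide)); simpa using this
private lemma irr3 : Irrational (Real.sqrt 3) := by
  have := irr_sqrt_nat 3 (notSquare 3 1 (by norm_num) (by decide)); simpa using this
private lemma irr5 : Irrational (Real.sqrt 5) := by
  have := irr_sqrt_nat 5 (notSquare 5 2 (by norm_num) (by decide)); simpa using this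

private lemma sqrt_mul_sqrt (a b : ℕ) :
    Real.sqrt a * Real.sqrt b = Real.sqrt (((a * b : ℕ) : ℝ)) := by
  rw [← Real.sqrt_mul (by positivity)]
  norm_cast

private lemma irr_mul (a b c : ℕ) (h : a * b = c) (hc : ¬IsSquare c) :
    Irrational (Real.sqrt a * Real.sqrt b) := by
  rw [sqrt_mul_sqrt, h]
  exact irr_sqrt_nat c hc

private lemma lin4 (a b c d : ℚ)
    (h : (a : ℝ) + b * Real.sqrt 2 + c * Real.sqrt 3 + d * Real.sqrt 5 = 0) :
    a = 0 ∧ b = 0 ∧ c = 0 ∧ d = 0 := by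
  have s2 : Real.sqrt 2 * Real.sqrt 2 = 2 := Real.mul_self_sqrt (by norm_num)
  have s3 : Real.sqrt 3 * Real.sqrt 3 = 3 := Real.mul_self_sqrt (by norm_num)
  have s5 : Real.sqrt 5 * Real.sqrt 5 = 5 := Real.mul_self_sqrt (by norm_num)
  have s35 : Real.sqrt 3 * Real.sqrt 5 = Real.sqrt 15 := by
    have h' := sqrt_mul_sqrt 3 5
    norm_num at h'
    exact h'
  have h1 : (a:ℝ) + b * Real.sqrt 2 = -((c:ℝ) * Real.sqrt 3 + d * Real.sqrt 5) := by linarith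
  have hsq : ((a:ℝ) + b * Real.sqrt 2) * ((a:ℝ) + b * Real.sqrt 2)
      = ((c:ℝ) * Real.sqrt 3 + d * Real.sqrt 5) * ((c:ℝ) * Real.sqrt 3 + d * Real.sqrt 5) := by
    rw [h1]; ring
  have key : ((a^2 + 2*b^2 - 3*c^2 - 5*d^2 : ℚ) : ℝ) + ((2*a*b : ℚ) : ℝ) * Real.sqrt 2
      + ((-(2*c*d) : ℚ) : ℝ) * Real.sqrt 15 = 0 := by
    push_cast
    linear_combination hsq - (b:ℝ)^2 * s2 + (c:ℝ)^2 * s3 + (d:ℝ)^2 * s5 + 2*(c:ℝ)*(d:ℝ) * s35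
  have irr15 : Irrational (Real.sqrt 15) := by
    have := irr_sqrt_nat 15 (notSquare 15 3 (by norm_num) (by decide)); simpa using this
  obtain ⟨hE, hab, hcd⟩ := lin3 2 15 (by simpa using irr2) (by simpa using irr15)
    (irr_mul 2 15 30 rfl (notSquare 30 5 (by norm_num) (by decide))) (a^2+2*b^2-3*c^2-5*d^2) (2*a*b) (-(2*c*d)) (by push_cast; push_cast at key; linarith)
  have hab' : a * b = 0 := by linarith [hab]
  have hcd' : c * d = 0 := by linarith [hcd]
  rcases mul_eq_zero.mp hab' with ha | hb
  · subst ha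
    rcases mul_eq_zero.mp hcd' with hc | hd
    · subst hc
      obtain ⟨_, hb, hd⟩ := lin3 2 5 (by simpa using irr2) (by simpa using irr5)
        (irr_mul 2 5 10 rfl (notSquare 10 3 (by norm_num) (by decide))) 0 b d (by push_cast; push_cast at h; linarith)
      exact ⟨rfl, hb, rfl, hd⟩
    · subst hd
      obtain ⟨_, hb, hc⟩ := lin3 2 3 (by simpa using irr2) (by simpa using irr3)
        (irr_mul 2 3 6 rfl (notSquare 6 2 (by norm_num) (by decide))) 0 b c (by push_cast; push_cast at h; linarith)
      exact ⟨rfl, hb, hc, rfl⟩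
  · subst hb
    rcases mul_eq_zero.mp hcd' with hc | hd
    · subst hc
      obtain ⟨ha, hd⟩ := lin2 irr5 (a := a) (b := d) (by push_cast at h ⊢; linarith)
      exact ⟨ha, rfl, rfl, hd⟩
    · subst hd
      obtain ⟨ha, hc⟩ := lin2 irr3 (a := a) (b := c) (by push_cast at h ⊢; linarith)
      exact ⟨ha, rfl, hc, rfl⟩


open MeasureTheory Filter Topology

noncomputable section KroneckerAux

instance : MeasurableSpace Circle := borel Circle
instance : BorelSpace Circle := ⟨rfl⟩

abbrev T4 := Fin 4 → Circle

def rfreq : Fin 4 → ℝ := ![1, Real.sqrt 2, Real.sqrt 3, Real.sqrt 5]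

def freq (n : Fin 4 → ℤ) : ℝ := ∑ j, (n j : ℝ) * rfreq j


lemma rfreq0 : rfreq 0 = 1 := rfl
lemma rfreq1 : rfreq 1 = Real.sqrt 2 := rfl
lemma rfreq2 : rfreq 2 = Real.sqrt 3 := rfl
lemma rfreq3 : rfreq 3 = Real.sqrt 5 := rfl

lemma freq_ne_zero {n : Fin 4 → ℤ} (hn : n ≠ 0) : freq n ≠ 0 := by
  intro h
  apply hn
  have h' : ((n 0 : ℚ) : ℝ) + ((n 1 : ℚ) : ℝ) * Real.sqrt 2 + ((n 2 : ℚ) : ℝ) * Real.sqrt 3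
      + ((n 3 : ℚ) : ℝ) * Real.sqrt 5 = 0 := by
    rw [freq, Fin.sum_univ_four, rfreq0, rfreq1, rfreq2, rfreq3] at h
    push_cast
    linarith [h]
  obtain ⟨h0, h1, h2, h3⟩ := lin4 _ _ _ _ h'
  funext j
  have hz : (0 : Fin 4 → ℤ) j = 0 := rfl
  rw [hz]
  fin_cases j
  · exact_mod_cast h0
  · exact_mod_cast h1
  · exact_mod_cast h2
  · exact_mod_cast h3

def charF (n : Fin 4 → ℤ) : C(T4, ℂ) :=
  ⟨fun z => ∏ j, (z j : ℂ) ^ (n j), by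
    apply continuous_finset_prod
    intro j _
    exact (continuous_subtype_val.comp (continuous_apply j)).zpow₀ _
      (fun z => Or.inl (Circle.coe_ne_zero _))⟩

lemma charF_apply (n : Fin 4 → ℤ) (z : T4) : charF n z = ∏ j, (z j : ℂ) ^ (n j) := rfl

lemma charF_zero : charF 0 = 1 := by
  ext z; simp [charF_apply]

lemma charF_mul (m n : Fin 4 → ℤ) : charF m * charF n = charF (m + n) := by
  ext z
  simp only [ContinuousMap.mul_apply, charF_apply, ← Finset.prod_mul_distrib]
  refine Finset.prod_congr rfl fun j _ => ?_
  rw [Pi.add_apply, zpow_add₀ (Circle.coe_ne_zero _)]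

lemma star_charF (n : Fin 4 → ℤ) : star (charF n) = charF (-n) := by
  ext z
  simp only [ContinuousMap.star_apply, charF_apply]
  rw [show (star (∏ j, (z j : ℂ) ^ (n j)) : ℂ)
      = (starRingEnd ℂ) (∏ j, (z j : ℂ) ^ (n j)) from rfl, map_prod]
  refine Finset.prod_congr rfl fun j _ => ?_
  rw [map_zpow₀, ← Circle.coe_inv_eq_conj, Circle.coe_inv, inv_zpow, Pi.neg_apply, zpow_neg]

def monSpan : Submodule ℂ C(T4, ℂ) := Submodule.span ℂ (Set.range charF)

lemma charF_mem (n : Fin 4 → ℤ) : charF n ∈ monSpan :=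
  Submodule.subset_span ⟨n, rfl⟩

lemma monSpan_mul {a b : C(T4, ℂ)} (ha : a ∈ monSpan) (hb : b ∈ monSpan) :
    a * b ∈ monSpan := by
  have key : ∀ n : Fin 4 → ℤ, ∀ b ∈ monSpan, charF n * b ∈ monSpan := by
    intro n b hb
    refine Submodule.span_induction ?_ ?_ ?_ ?_ hb
    · rintro x ⟨m, rfl⟩
      rw [charF_mul]
      exact charF_mem _
    · simpa using monSpan.zero_mem
    · intro x y _ _ hx hy
      rw [mul_add]
      exact monSpan.add_mem hx hy
    · intro c x _ hx
      rw [mul_smul_comm]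
      exact monSpan.smul_mem c hx
  refine Submodule.span_induction ?_ ?_ ?_ ?_ ha
  · rintro x ⟨m, rfl⟩
    exact key m b hb
  · simpa using monSpan.zero_mem
  · intro x y _ _ hx hy
    rw [add_mul]
    exact monSpan.add_mem hx hy
  · intro c x _ hx
    rw [smul_mul_assoc]
    exact monSpan.smul_mem c hx

lemma monSpan_star {a : C(T4, ℂ)} (ha : a ∈ monSpan) : star a ∈ monSpan := by
  refine Submodule.span_induction ?_ ?_ ?_ ?_ ha
  · rintro x ⟨m, rfl⟩
    rw [star_charF]
    exact charF_mem _
  · simpa using monSpan.zero_mem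
  · intro x y _ _ hx hy
    rw [star_add]
    exact monSpan.add_mem hx hy
  · intro c x _ hx
    rw [star_smul]
    exact monSpan.smul_mem _ hx

def monAlg : StarSubalgebra ℂ C(T4, ℂ) where
  carrier := monSpan
  mul_mem' := monSpan_mul
  one_mem' := charF_zero ▸ charF_mem 0
  add_mem' := fun ha hb => monSpan.add_mem ha hb
  zero_mem' := monSpan.zero_mem
  algebraMap_mem' := fun r => by
    rw [Algebra.algebraMap_eq_smul_one]
    exact monSpan.smul_mem r (charF_zero ▸ charF_mem 0)
  star_mem' := monSpan_star

lemma monAlg_separates : monAlg.SeparatesPoints := by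
  intro x y hxy
  obtain ⟨j, hj⟩ := Function.ne_iff.mp hxy
  refine ⟨_, ⟨charF (Pi.single j 1), charF_mem _, rfl⟩, ?_⟩
  have hx : ∀ z : T4, charF (Pi.single j 1) z = (z j : ℂ) := by
    intro z
    rw [charF_apply, Finset.prod_eq_single j]
    · simp
    · intro k _ hk; simp [Pi.single_apply, hk]
    · simp
  show charF (Pi.single j 1) x ≠ charF (Pi.single j 1) y
  rw [hx, hx]
  exact fun h => hj (Circle.coe_injective h)

lemma monAlg_dense (f : C(T4, ℂ)) {δ : ℝ} (hδ : 0 < δ) :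
    ∃ p ∈ monSpan, dist f p < δ := by
  have h := ContinuousMap.starSubalgebra_topologicalClosure_eq_top_of_separatesPoints
    monAlg monAlg_separates
  have hf : f ∈ closure (monAlg : Set C(T4, ℂ)) := by
    rw [← StarSubalgebra.topologicalClosure_coe, h]
    trivial
  rcases Metric.mem_closure_iff.mp hf δ hδ with ⟨p, hp, hdist⟩
  exact ⟨p, hp, hdist⟩

/-! ### Haar measure -/

def haarT : Measure T4 :=
  Measure.haarMeasure ⟨⟨Set.univ, isCompact_univ⟩, by simp⟩

instance : haarT.IsMulLeftInvariant := Measure.isMulLeftInvariant_haarMeasure _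

lemma haarT_univ : haarT Set.univ = 1 := Measure.haarMeasure_self

instance : IsProbabilityMeasure haarT := ⟨haarT_univ⟩

instance : haarT.IsOpenPosMeasure :=
  isOpenPosMeasure_of_mulLeftInvariant_of_compact Set.univ isCompact_univ
    (by rw [haarT_univ]; exact one_ne_zero)

lemma contIntegrable (f : C(T4, ℂ)) : Integrable f haarT :=
  f.continuous.integrable_of_hasCompactSupport (HasCompactSupport.of_compactSpace _)

lemma integral_charF {n : Fin 4 → ℤ} (hn : n ≠ 0) : ∫ z, charF n z ∂haarT = 0 := by
  obtain ⟨j, hj⟩ := Function.ne_iff.mp hn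
  have hj' : (n j : ℂ) ≠ 0 := by exact_mod_cast hj
  set g : T4 := Function.update (1 : T4) j (Circle.exp (Real.pi / (n j))) with hg
  have hcg : charF n g = -1 := by
    rw [charF_apply, Finset.prod_eq_single j]
    · rw [hg, Function.update_self, Circle.coe_exp, ← Complex.exp_int_mul]
      rw [show ((n j : ℂ) * ((Real.pi / (n j) : ℝ) * I)) = Real.pi * I by
        push_cast; field_simp]
      exact Complex.exp_pi_mul_I
    · intro k _ hk
      rw [hg, Function.update_of_ne hk]
      simp
    · simp
  have inv := integral_mul_left_eq_self (μ := haarT) (fun z => charF n z) g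
  have hmul : ∀ z : T4, charF n (g * z) = - charF n z := by
    intro z
    have : charF n (g * z) = charF n g * charF n z := by
      rw [charF_apply, charF_apply, charF_apply, ← Finset.prod_mul_distrib]
      refine Finset.prod_congr rfl fun k _ => ?_
      rw [Pi.mul_apply, Circle.coe_mul, mul_zpow]
    rw [this, hcg]; ring
  rw [show (fun z => charF n (g * z)) = (fun z => - charF n z) from funext hmul] at inv
  rw [integral_neg] at inv
  have h2 : (2 : ℂ) * ∫ z, charF n z ∂haarT = 0 := by linear_combination -inv
  exact (mul_eq_zero.mp h2).resolve_left two_ne_zero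

/-! ### The orbit and Weyl's argument -/

def gam : ℝ → T4 := fun t j => Circle.exp (rfreq j * t)

lemma continuous_gam : Continuous gam :=
  continuous_pi fun j => Circle.exp.continuous.comp (continuous_const.mul continuous_id)

lemma charF_gam (n : Fin 4 → ℤ) (t : ℝ) :
    charF n (gam t) = Complex.exp ((freq n : ℂ) * t * I) := by
  rw [charF_apply]
  have h1 : ∀ j : Fin 4, ((gam t j : ℂ)) ^ (n j)
      = Complex.exp ((n j : ℂ) * (((rfreq j * t : ℝ) : ℂ) * I)) := by
    intro j
    rw [show (gam t j : ℂ) = Complex.exp (((rfreq j * t : ℝ) : ℂ) * I) from Circle.coe_exp _,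
      ← Complex.exp_int_mul]
  rw [Finset.prod_congr rfl (fun j _ => h1 j), ← Complex.exp_sum]
  congr 1
  rw [freq]
  push_cast
  rw [Finset.sum_mul, Finset.sum_mul]
  refine Finset.sum_congr rfl fun j _ => by ring

def birk (f : C(T4, ℂ)) (T : ℝ) : ℂ := (T : ℂ)⁻¹ * ∫ t in (0:ℝ)..T, f (gam t)

lemma birk_weyl {f : C(T4, ℂ)} (hf : f ∈ monSpan) :
    Tendsto (birk f) atTop (𝓝 (∫ z, f z ∂haarT)) := by
  refine Submodule.span_induction ?_ ?_ ?_ ?_ hf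
  · rintro x ⟨n, rfl⟩
    rcases eq_or_ne n 0 with hn | hn
    · subst hn
      have h1 : ∀ᶠ T in atTop, birk (charF 0) T = 1 := by
        filter_upwards [eventually_gt_atTop (0:ℝ)] with T hT
        rw [birk]
        have : ∀ t : ℝ, charF 0 (gam t) = 1 := by intro t; rw [charF_zero]; rfl
        simp only [this, intervalIntegral.integral_const, sub_zero, Complex.real_smul, mul_one]
        rw [inv_mul_cancel₀ (by exact_mod_cast hT.ne' : (T:ℂ) ≠ 0)]
      have h2 : (∫ z, charF 0 z ∂haarT) = 1 := by
        rw [charF_zero]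
        simp [ContinuousMap.one_apply, integral_const, haarT_univ]
      rw [h2]
      exact Filter.Tendsto.congr' (Filter.EventuallyEq.symm h1) tendsto_const_nhds
    · have hc : (freq n : ℂ) * I ≠ 0 := by
        apply mul_ne_zero _ I_ne_zero
        exact_mod_cast freq_ne_zero hn
      rw [integral_charF hn]
      apply squeeze_zero_norm' (a := fun T : ℝ => (2 / norm ((freq n : ℂ) * I)) / T)
      · filter_upwards [eventually_gt_atTop (0:ℝ)] with T hT
        rw [birk]
        have hint : ∀ t : ℝ, charF n (gam t) = Complex.exp (((freq n : ℂ) * I) * t) := by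
          intro t; rw [charF_gam]; ring_nf
        simp only [hint]
        rw [integral_exp_mul_complex hc, norm_mul, norm_inv, norm_div]
        have hT' : ‖(T : ℂ)‖ = T := by
          rw [Complex.norm_real, Real.norm_of_nonneg hT.le]
        rw [hT', show (2 / norm ((freq n : ℂ) * I)) / T
            = T⁻¹ * (2 / ‖(freq n : ℂ) * I‖) from by ring]
        have e1 : ∀ s : ℝ, ‖Complex.exp ((freq n : ℂ) * I * s)‖ = 1 := by
          intro s
          rw [Complex.norm_exp]
          rw [show ((freq n : ℂ) * I * s) = ((freq n * s : ℝ) : ℂ) * I by push_cast; ring]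
          simp
        have hb : ‖Complex.exp ((freq n : ℂ) * I * (T:ℂ))
            - Complex.exp ((freq n : ℂ) * I * (((0:ℝ)):ℂ))‖ ≤ 2 := by
          refine (norm_sub_le _ _).trans ?_
          rw [e1 T, e1 0]
          norm_num
        gcongr
      · have : Tendsto (fun T : ℝ => (2 / norm ((freq n : ℂ) * I)) / T) atTop (𝓝 0) :=
          tendsto_const_nhds.div_atTop tendsto_id
        exact this
  · have hz : ∀ T : ℝ, birk 0 T = 0 := by
      intro T; rw [birk]; simp
    have hI : (∫ z, (0 : C(T4, ℂ)) z ∂haarT) = 0 := by simp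
    rw [hI]
    exact Tendsto.congr (fun T => (hz T).symm) tendsto_const_nhds
  · intro x y hx hy hbx hby
    have hx' : IntervalIntegrable (fun t => x (gam t)) MeasureTheory.volume 0 1 := by
      exact (x.continuous.comp continuous_gam).intervalIntegrable _ _
    have hfun : ∀ T : ℝ, birk (x + y) T = birk x T + birk y T := by
      intro T
      have hx'' : IntervalIntegrable (fun t => x (gam t)) MeasureTheory.volume 0 T :=
        (x.continuous.comp continuous_gam).intervalIntegrable _ _
      have hy'' : IntervalIntegrable (fun t => y (gam t)) MeasureTheory.volume 0 T :=
        (y.continuous.comp continuous_gam).intervalIntegrable _ _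
      have hcongr : (∫ t in (0:ℝ)..T, (x + y) (gam t))
          = ∫ t in (0:ℝ)..T, (x (gam t) + y (gam t)) :=
        intervalIntegral.integral_congr fun t _ => rfl
      rw [birk, birk, birk, hcongr, intervalIntegral.integral_add hx'' hy'', mul_add]
    have hint : (∫ z, (x + y) z ∂haarT) = (∫ z, x z ∂haarT) + ∫ z, y z ∂haarT := by
      have hcongr : (∫ z, (x + y) z ∂haarT) = ∫ z, (x z + y z) ∂haarT := by rfl
      rw [hcongr, integral_add (contIntegrable x) (contIntegrable y)]
    rw [hint]
    exact Tendsto.congr (fun T => (hfun T).symm) (hbx.add hby)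
  · intro c x hx hbx
    have hfun : ∀ T : ℝ, birk (c • x) T = c * birk x T := by
      intro T
      have hcongr : (∫ t in (0:ℝ)..T, (c • x) (gam t))
          = ∫ t in (0:ℝ)..T, c • (x (gam t)) :=
        intervalIntegral.integral_congr fun t _ => rfl
      rw [birk, birk, hcongr, intervalIntegral.integral_smul, smul_eq_mul]
      ring
    have hint : (∫ z, (c • x) z ∂haarT) = c * ∫ z, x z ∂haarT := by
      have hcongr : (∫ z, (c • x) z ∂haarT) = ∫ z, c • (x z) ∂haarT := by rfl
      rw [hcongr, integral_smul, smul_eq_mul]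
    rw [hint]
    exact Tendsto.congr (fun T => (hfun T).symm) (hbx.const_mul c)

theorem denseRange_gam : DenseRange gam := by
  rw [denseRange_iff_closure_range]
  by_contra hd
  obtain ⟨x₀, hx₀⟩ : ∃ x₀ : T4, x₀ ∉ closure (Set.range gam) := by
    by_contra h
    push_neg at h
    exact hd (Set.eq_univ_of_forall h)
  obtain ⟨f, hf0, hf1, hf01⟩ := exists_continuous_zero_one_of_isClosed
    isClosed_closure (isClosed_singleton (x := x₀))
    (Set.disjoint_singleton_right.mpr hx₀)
  set F : C(T4, ℂ) := ⟨fun z => ((f z : ℝ) : ℂ), Complex.continuous_ofReal.comp f.continuous⟩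
    with hF
  have hFγ : ∀ t : ℝ, F (gam t) = 0 := by
    intro t
    have : f (gam t) = 0 := hf0 (subset_closure ⟨t, rfl⟩)
    simp [hF, this]
  have hIF : (∫ z, F z ∂haarT) = ((∫ z, f z ∂haarT : ℝ) : ℂ) := integral_ofReal
  have hpos : 0 < ∫ z, f z ∂haarT := by
    rw [integral_pos_iff_support_of_nonneg (fun z => (hf01 z).1)
      (by
        have : Integrable (fun z => ((F z).re : ℝ)) haarT := (contIntegrable F).re
        refine this.congr (Filter.Eventually.of_forall fun z => ?_)
        simp [hF])]
    have hsub : f ⁻¹' (Set.Ioi 0) ⊆ Function.support f := by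
      intro z hz
      exact ne_of_gt hz
    refine lt_of_lt_of_le ?_ (measure_mono hsub)
    refine (IsOpen.preimage f.continuous isOpen_Ioi).measure_pos haarT ⟨x₀, ?_⟩
    simp [hf1 rfl]
  set δ : ℝ := (∫ z, f z ∂haarT) / 3 with hδdef
  have hδ : 0 < δ := by positivity
  obtain ⟨p, hp, hdist⟩ := monAlg_dense F hδ
  have hptw : ∀ z : T4, ‖p z - F z‖ ≤ δ := by
    intro z
    have := ContinuousMap.dist_apply_le_dist (f := F) (g := p) z
    rw [dist_eq_norm] at this
    calc ‖p z - F z‖ = ‖F z - p z‖ := by rw [norm_sub_rev]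
      _ ≤ dist F p := this
      _ ≤ δ := hdist.le
  have hbirk_bound : ∀ᶠ T in atTop, ‖birk p T‖ ≤ δ := by
    filter_upwards [eventually_gt_atTop (0:ℝ)] with T hT
    rw [birk]
    have heq : ∀ t : ℝ, p (gam t) = p (gam t) - F (gam t) := by
      intro t; rw [hFγ t, sub_zero]
    rw [intervalIntegral.integral_congr (g := fun t => p (gam t) - F (gam t))
      (fun t _ => heq t)]
    rw [norm_mul, norm_inv]
    have hT' : ‖(T : ℂ)‖ = T := by rw [Complex.norm_real, Real.norm_of_nonneg hT.le]
    rw [hT']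
    have hle : ‖∫ t in (0:ℝ)..T, (p (gam t) - F (gam t))‖ ≤ δ * |T - 0| :=
      intervalIntegral.norm_integral_le_of_norm_le_const fun t _ => hptw (gam t)
    rw [sub_zero, abs_of_pos hT] at hle
    calc T⁻¹ * ‖∫ t in (0:ℝ)..T, (p (gam t) - F (gam t))‖ ≤ T⁻¹ * (δ * T) := by
          exact mul_le_mul_of_nonneg_left hle (by positivity)
      _ = δ := by field_simp
  have hlim : ‖∫ z, p z ∂haarT‖ ≤ δ := by
    have h1 : Tendsto (fun T => ‖birk p T‖) atTop (𝓝 ‖∫ z, p z ∂haarT‖) :=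
      (birk_weyl hp).norm
    exact le_of_tendsto h1 hbirk_bound
  have hclose : ‖(∫ z, p z ∂haarT) - ∫ z, F z ∂haarT‖ ≤ δ := by
    rw [← integral_sub (contIntegrable p) (contIntegrable F)]
    have := norm_integral_le_of_norm_le_const (μ := haarT)
      (f := fun z => p z - F z) (C := δ) (Filter.Eventually.of_forall fun z => hptw z)
    rw [Measure.real, haarT_univ] at this
    simpa using this
  have h3δ : ‖∫ z, F z ∂haarT‖ = 3 * δ := by
    rw [hIF, Complex.norm_real, Real.norm_of_nonneg hpos.le, hδdef]
    ring
  have : (3:ℝ) * δ ≤ 2 * δ := by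
    calc (3:ℝ) * δ = ‖∫ z, F z ∂haarT‖ := h3δ.symm
      _ ≤ ‖(∫ z, F z ∂haarT) - ∫ z, p z ∂haarT‖ + ‖∫ z, p z ∂haarT‖ := by
          simpa using norm_add_le ((∫ z, F z ∂haarT) - ∫ z, p z ∂haarT) (∫ z, p z ∂haarT)
      _ ≤ δ + δ := by
          rw [norm_sub_rev]
          exact add_le_add hclose hlim
      _ = 2 * δ := by ring
  linarith

/-! ### From torus density to the theorem -/

lemma kronecker_approx (x : T4) {ε : ℝ} (hε : 0 < ε) :
    ∃ t : ℝ, ∀ j, norm ((gam t j : ℂ) - (x j : ℂ)) < ε := by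
  rcases Metric.mem_closure_iff.mp (denseRange_gam x) ε hε with ⟨y, ⟨t, rfl⟩, hy⟩
  refine ⟨t, fun j => ?_⟩
  have h1 : dist (x j) (gam t j) ≤ dist x (gam t) := dist_le_pi_dist x (gam t) j
  have h2 : dist (x j) (gam t j) = norm ((gam t j : ℂ) - (x j : ℂ)) := by
    rw [show dist (x j) (gam t j) = dist (x j : ℂ) (gam t j : ℂ) from rfl, Complex.dist_eq, norm_sub_rev]
  rw [h2] at h1
  exact lt_of_le_of_lt h1 hy

lemma sub_one_ne {w : ℂ} (hw : w ∈ Metric.ball (0:ℂ) 1) : w - 1 ≠ 0 := by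
  have h1 : norm w < 1 := by
    simpa [Complex.dist_eq] using Metric.mem_ball.mp hw
  intro h
  rw [sub_eq_zero] at h
  rw [h] at h1
  simp at h1

lemma mobius_re_neg {w : ℂ} (hw : w ∈ Metric.ball (0:ℂ) 1) : ((w + 1)/(w - 1)).re < 0 := by
  have h1 : norm w < 1 := by
    simpa [Complex.dist_eq] using Metric.mem_ball.mp hw
  have hns : 0 < Complex.normSq (w - 1) := Complex.normSq_pos.mpr (sub_one_ne hw)
  have hsq : Complex.normSq w < 1 := by
    rw [Complex.normSq_eq_norm_sq]
    nlinarith [norm_nonneg w]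
  rw [Complex.div_re, ← add_div]
  apply div_neg_of_neg_of_pos _ hns
  have hre : (w + 1).re * (w - 1).re + (w + 1).im * (w - 1).im
      = Complex.normSq w - 1 := by
    simp [Complex.add_re, Complex.sub_re, Complex.add_im, Complex.sub_im,
      Complex.normSq_apply]
    ring
  rw [hre]
  linarith

lemma mobius_inv {z : ℂ} (hz : z.re < 0) :
    (z + 1)/(z - 1) ∈ Metric.ball (0:ℂ) 1 ∧
    ((z + 1)/(z - 1) + 1)/((z + 1)/(z - 1) - 1) = z := by
  have hz1 : z - 1 ≠ 0 := by
    intro h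
    have := congrArg Complex.re h
    simp [Complex.sub_re] at this
    linarith
  constructor
  · rw [Metric.mem_ball, Complex.dist_eq, sub_zero, norm_div]
    rw [div_lt_one (norm_pos_iff.mpr hz1)]
    have hlt : Complex.normSq (z + 1) < Complex.normSq (z - 1) := by
      simp only [Complex.normSq_apply, Complex.add_re, Complex.add_im,
        Complex.sub_re, Complex.sub_im, Complex.one_re, Complex.one_im]
      nlinarith
    rw [Complex.norm_def, Complex.norm_def]
    exact Real.sqrt_lt_sqrt (Complex.normSq_nonneg _) hlt
  · have h2 : (z + 1)/(z - 1) + 1 = (2*z)/(z - 1) := by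
      field_simp
      ring
    have h3 : (z + 1)/(z - 1) - 1 = 2/(z - 1) := by
      field_simp
      ring
    rw [h2, h3]
    rw [div_div_div_cancel_right₀]
    · ring_nf
    all_goals simp [hz1]

lemma half_sum_exp_lt_one {u v : ℂ} (hu : u.re < 0) (hv : v.re < 0) :
    ‖(1/2 : ℂ) * (Complex.exp u + Complex.exp v)‖ < 1 := by
  rw [norm_mul, show ‖(1/2 : ℂ)‖ = 1/2 by norm_num]
  have h1 : ‖Complex.exp u‖ < 1 := by
    rw [Complex.norm_exp]
    have := Real.exp_lt_exp.mpr hu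
    simpa using this
  have h2 : ‖Complex.exp v‖ < 1 := by
    rw [Complex.norm_exp]
    have := Real.exp_lt_exp.mpr hv
    simpa using this
  have h3 : ‖Complex.exp u + Complex.exp v‖ ≤ ‖Complex.exp u‖ + ‖Complex.exp v‖ :=
    norm_add_le _ _
  nlinarith

lemma circle_pair {u : ℂ} (hu : norm u ≤ 1) :
    ∃ α β : ℝ, u = (1/2 : ℂ) * (Complex.exp ((α:ℝ) * I) + Complex.exp ((β:ℝ) * I)) := by
  set φ := u.arg
  set a := Real.arccos (norm u) with ha
  refine ⟨φ + a, φ - a, ?_⟩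
  have hcos : Real.cos a = norm u :=
    Real.cos_arccos (by linarith [norm_nonneg u]) hu
  have hsum : Complex.exp (((φ + a : ℝ)) * I) + Complex.exp (((φ - a : ℝ)) * I)
      = Complex.exp ((φ:ℝ) * I) * (2 * ((Real.cos a : ℝ) : ℂ)) := by
    rw [show (((φ + a : ℝ)) : ℂ) * I = (φ:ℝ) * I + (a:ℝ) * I by push_cast; ring,
      show (((φ - a : ℝ)) : ℂ) * I = (φ:ℝ) * I + (-a:ℝ) * I by push_cast; ring,
      Complex.exp_add, Complex.exp_add, ← mul_add]
    congr 1
    rw [Complex.exp_mul_I, Complex.exp_mul_I]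
    push_cast
    rw [Complex.cos_neg, Complex.sin_neg]
    ring
  rw [hsum, hcos]
  rw [show Complex.exp ((φ:ℝ) * I) * (2 * ((norm u : ℝ) : ℂ))
      = 2 * (((norm u : ℝ) : ℂ) * Complex.exp ((u.arg :ℝ) * I)) by ring,
    Complex.norm_mul_exp_arg_mul_I]
  ring

lemma exp_est (c t η α : ℝ) (hc1 : 1 ≤ c) (hc3 : c ≤ 3) (hη : 0 < η)
    (happrox : norm (Complex.exp (((c * t : ℝ) : ℂ) * I) - Complex.exp ((α:ℝ) * I)) < η) :
    norm (Complex.exp ((c:ℂ) * (((-η : ℝ) : ℂ) + (t:ℝ) * I)) - Complex.exp ((α:ℝ) * I))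
      < 4 * η := by
  have hsplit : Complex.exp ((c:ℂ) * (((-η : ℝ) : ℂ) + (t:ℝ) * I))
      = ((Real.exp (-(c*η)) : ℝ) : ℂ) * Complex.exp (((c * t : ℝ) : ℂ) * I) := by
    rw [Complex.ofReal_exp, ← Complex.exp_add]
    congr 1
    push_cast
    ring
  have habs1 : norm (Complex.exp (((c * t : ℝ) : ℂ) * I)) = 1 := by
    rw [Complex.norm_exp]
    rw [show (((c * t : ℝ) : ℂ) * I).re = 0 by simp]
    exact Real.exp_zero
  have h1 : norm (Complex.exp ((c:ℂ) * (((-η : ℝ) : ℂ) + (t:ℝ) * I))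
      - Complex.exp (((c * t : ℝ) : ℂ) * I)) ≤ 3 * η := by
    rw [hsplit, show ((Real.exp (-(c*η)) : ℝ) : ℂ) * Complex.exp (((c * t : ℝ) : ℂ) * I)
        - Complex.exp (((c * t : ℝ) : ℂ) * I)
        = (((Real.exp (-(c*η)) : ℝ) : ℂ) - 1) * Complex.exp (((c * t : ℝ) : ℂ) * I) by ring,
      norm_mul, habs1, mul_one]
    rw [show ((Real.exp (-(c*η)) : ℝ) : ℂ) - 1 = ((Real.exp (-(c*η)) - 1 : ℝ) : ℂ) by
        push_cast; ring, Complex.norm_real, Real.norm_eq_abs]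
    have he1 : Real.exp (-(c*η)) ≤ 1 := Real.exp_le_one_iff.mpr (by nlinarith)
    rw [abs_of_nonpos (by linarith)]
    have := Real.add_one_le_exp (-(c*η))
    nlinarith
  calc norm (Complex.exp ((c:ℂ) * (((-η : ℝ) : ℂ) + (t:ℝ) * I))
        - Complex.exp ((α:ℝ) * I))
      ≤ norm (Complex.exp ((c:ℂ) * (((-η : ℝ) : ℂ) + (t:ℝ) * I))
          - Complex.exp (((c * t : ℝ) : ℂ) * I))
        + norm (Complex.exp (((c * t : ℝ) : ℂ) * I) - Complex.exp ((α:ℝ) * I)) :=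
      norm_sub_le_norm_sub_add_norm_sub _ _ _
    _ < 3 * η + η := add_lt_add_of_le_of_lt h1 happrox
    _ = 4 * η := by ring

lemma one_le_sqrt' {x : ℝ} (hx : 1 ≤ x) : 1 ≤ Real.sqrt x := by
  nlinarith [Real.sq_sqrt (by linarith : (0:ℝ) ≤ x), Real.sqrt_nonneg x]

lemma sqrt_le_three {x : ℝ} (h0 : 0 ≤ x) (hx : x ≤ 9) : Real.sqrt x ≤ 3 := by
  nlinarith [Real.sq_sqrt h0, Real.sqrt_nonneg x]

end KroneckerAux

open Filter Topology MeasureTheory in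
/-- The explicit map `g(w) = (½(e^{(w+1)/(w-1)} + e^{√2(w+1)/(w-1)}),
½(e^{√3(w+1)/(w-1)} + e^{√5(w+1)/(w-1)}))` is holomorphic on the unit disk `Δ`, takes
values in the bidisk `Δ²`, and has dense image in `Δ²`. -/
theorem explicit_dense_map_disk_to_bidisk (g : ℂ → ℂ × ℂ)
    (hg : ∀ w : ℂ, g w =
      ((1 / 2) * (Complex.exp ((w + 1) / (w - 1)) +
          Complex.exp ((Real.sqrt 2 : ℂ) * ((w + 1) / (w - 1)))),
       (1 / 2) * (Complex.exp ((Real.sqrt 3 : ℂ) * ((w + 1) / (w - 1))) +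
          Complex.exp ((Real.sqrt 5 : ℂ) * ((w + 1) / (w - 1)))))) :
    DifferentiableOn ℂ g (Metric.ball (0 : ℂ) 1) ∧
    (∀ w ∈ Metric.ball (0 : ℂ) 1, ‖(g w).1‖ < 1 ∧ ‖(g w).2‖ < 1) ∧
    {v : ℂ × ℂ | ‖v.1‖ < 1 ∧ ‖v.2‖ < 1} ⊆ closure (g '' Metric.ball (0 : ℂ) 1) := by
  have hgF : g = fun w : ℂ =>
      ((1 / 2) * (Complex.exp ((w + 1) / (w - 1)) +
          Complex.exp ((Real.sqrt 2 : ℂ) * ((w + 1) / (w - 1)))),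
       (1 / 2) * (Complex.exp ((Real.sqrt 3 : ℂ) * ((w + 1) / (w - 1))) +
          Complex.exp ((Real.sqrt 5 : ℂ) * ((w + 1) / (w - 1))))) := funext hg
  subst hgF
  have h2pos : (0:ℝ) < Real.sqrt 2 := Real.sqrt_pos.mpr (by norm_num)
  have h3pos : (0:ℝ) < Real.sqrt 3 := Real.sqrt_pos.mpr (by norm_num)
  have h5pos : (0:ℝ) < Real.sqrt 5 := Real.sqrt_pos.mpr (by norm_num)
  refine ⟨?_, ?_, ?_⟩
  · -- differentiability
    have hM : DifferentiableOn ℂ (fun w : ℂ => (w + 1) / (w - 1)) (Metric.ball 0 1) := by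
      apply DifferentiableOn.div
      · exact (differentiable_id.add_const 1).differentiableOn
      · exact (differentiable_id.sub_const 1).differentiableOn
      · exact fun w hw => sub_one_ne hw
    exact DifferentiableOn.prodMk
      (((hM.cexp).add ((hM.const_mul _).cexp)).const_mul _)
      ((((hM.const_mul _).cexp).add ((hM.const_mul _).cexp)).const_mul _)
  · -- maps into the bidisk
    intro w hw
    have hz := mobius_re_neg hw
    constructor
    · exact half_sum_exp_lt_one hz
        (by rw [Complex.re_ofReal_mul]; exact mul_neg_of_pos_of_neg h2pos hz)
    · exact half_sum_exp_lt_one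
        (by rw [Complex.re_ofReal_mul]; exact mul_neg_of_pos_of_neg h3pos hz)
        (by rw [Complex.re_ofReal_mul]; exact mul_neg_of_pos_of_neg h5pos hz)
  · -- density
    intro v hv
    rw [Metric.mem_closure_iff]
    intro ε hε
    set η := ε/8 with hηdef
    have hη : 0 < η := by positivity
    obtain ⟨α₁, β₁, hv1eq⟩ := circle_pair (u := v.1)
      (by exact hv.1.le)
    obtain ⟨α₂, β₂, hv2eq⟩ := circle_pair (u := v.2)
      (by exact hv.2.le)
    set x : T4 := ![Circle.exp α₁, Circle.exp β₁, Circle.exp α₂, Circle.exp β₂] with hxdef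
    obtain ⟨t, ht⟩ := kronecker_approx x hη
    set z : ℂ := ((-η : ℝ) : ℂ) + (t:ℝ) * I with hzdef
    have hzre : z.re < 0 := by
      rw [hzdef]
      simp only [Complex.add_re, Complex.ofReal_re, Complex.mul_re, Complex.I_re,
        Complex.ofReal_im, Complex.I_im]
      simp
      linarith
    obtain ⟨hwball, hwz⟩ := mobius_inv hzre
    set w : ℂ := (z + 1) / (z - 1) with hwdef
    refine ⟨_, ⟨w, hwball, rfl⟩, ?_⟩
    -- coordinatewise approximations
    have approx : ∀ (j : Fin 4) (c α : ℝ), rfreq j = c → x j = Circle.exp α →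
        norm (Complex.exp (((c * t : ℝ) : ℂ) * I) - Complex.exp ((α:ℝ) * I)) < η := by
      intro j c α hc hα
      have hgj : (gam t j : ℂ) = Complex.exp (((c * t : ℝ) : ℂ) * I) := by
        rw [show gam t j = Circle.exp (rfreq j * t) from rfl, Circle.coe_exp, hc]
      have hxj : (x j : ℂ) = Complex.exp ((α : ℝ) * I) := by
        rw [hα, Circle.coe_exp]
      rw [← hgj, ← hxj]
      exact ht j
    have e0 := exp_est 1 t η α₁ le_rfl (by norm_num) hη
      (approx 0 1 α₁ rfreq0 rfl)
    have e1 := exp_est (Real.sqrt 2) t η β₁ (one_le_sqrt' (by norm_num))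
      (sqrt_le_three (by norm_num) (by norm_num)) hη (approx 1 (Real.sqrt 2) β₁ rfreq1 rfl)
    have e2 := exp_est (Real.sqrt 3) t η α₂ (one_le_sqrt' (by norm_num))
      (sqrt_le_three (by norm_num) (by norm_num)) hη (approx 2 (Real.sqrt 3) α₂ rfreq2 rfl)
    have e3 := exp_est (Real.sqrt 5) t η β₂ (one_le_sqrt' (by norm_num))
      (sqrt_le_three (by norm_num) (by norm_num)) hη (approx 3 (Real.sqrt 5) β₂ rfreq3 rfl)
    rw [← hzdef] at e0 e1 e2 e3
    rw [Complex.ofReal_one, one_mul] at e0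
    have habs2 : norm (1/2 : ℂ) = 1/2 := by norm_num
    have comp1 : norm (v.1 - (1/2 : ℂ) * (Complex.exp z
        + Complex.exp ((Real.sqrt 2 : ℂ) * z))) < ε := by
      have hdiff : v.1 - (1/2 : ℂ) * (Complex.exp z + Complex.exp ((Real.sqrt 2 : ℂ) * z))
          = (1/2 : ℂ) * ((Complex.exp ((α₁:ℝ) * I) - Complex.exp z)
            + (Complex.exp ((β₁:ℝ) * I) - Complex.exp ((Real.sqrt 2 : ℂ) * z))) := by
        rw [hv1eq]; ring
      rw [hdiff, norm_mul, habs2]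
      have b1 : norm (Complex.exp ((α₁:ℝ) * I) - Complex.exp z) < 4 * η := by
        rw [norm_sub_rev]; exact e0
      have b2 : norm (Complex.exp ((β₁:ℝ) * I)
          - Complex.exp ((Real.sqrt 2 : ℂ) * z)) < 4 * η := by
        rw [norm_sub_rev]; exact e1
      calc (1/2 : ℝ) * norm ((Complex.exp ((α₁:ℝ) * I) - Complex.exp z)
              + (Complex.exp ((β₁:ℝ) * I) - Complex.exp ((Real.sqrt 2 : ℂ) * z)))
          ≤ 1/2 * (norm (Complex.exp ((α₁:ℝ) * I) - Complex.exp z)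
              + norm (Complex.exp ((β₁:ℝ) * I)
                - Complex.exp ((Real.sqrt 2 : ℂ) * z))) := by
            have := norm_add_le (Complex.exp ((α₁:ℝ) * I) - Complex.exp z)
              (Complex.exp ((β₁:ℝ) * I) - Complex.exp ((Real.sqrt 2 : ℂ) * z))
            linarith
        _ < 1/2 * (4 * η + 4 * η) := by linarith
        _ = ε/2 := by rw [hηdef]; ring
        _ < ε := by linarith
    have comp2 : norm (v.2 - (1/2 : ℂ) * (Complex.exp ((Real.sqrt 3 : ℂ) * z)
        + Complex.exp ((Real.sqrt 5 : ℂ) * z))) < ε := by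
      have hdiff : v.2 - (1/2 : ℂ) * (Complex.exp ((Real.sqrt 3 : ℂ) * z)
            + Complex.exp ((Real.sqrt 5 : ℂ) * z))
          = (1/2 : ℂ) * ((Complex.exp ((α₂:ℝ) * I) - Complex.exp ((Real.sqrt 3 : ℂ) * z))
            + (Complex.exp ((β₂:ℝ) * I) - Complex.exp ((Real.sqrt 5 : ℂ) * z))) := by
        rw [hv2eq]; ring
      rw [hdiff, norm_mul, habs2]
      have b1 : norm (Complex.exp ((α₂:ℝ) * I)
          - Complex.exp ((Real.sqrt 3 : ℂ) * z)) < 4 * η := by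
        rw [norm_sub_rev]; exact e2
      have b2 : norm (Complex.exp ((β₂:ℝ) * I)
          - Complex.exp ((Real.sqrt 5 : ℂ) * z)) < 4 * η := by
        rw [norm_sub_rev]; exact e3
      calc (1/2 : ℝ) * norm ((Complex.exp ((α₂:ℝ) * I)
              - Complex.exp ((Real.sqrt 3 : ℂ) * z))
              + (Complex.exp ((β₂:ℝ) * I) - Complex.exp ((Real.sqrt 5 : ℂ) * z)))
          ≤ 1/2 * (norm (Complex.exp ((α₂:ℝ) * I)
                - Complex.exp ((Real.sqrt 3 : ℂ) * z))
              + norm (Complex.exp ((β₂:ℝ) * I)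
                - Complex.exp ((Real.sqrt 5 : ℂ) * z))) := by
            have := norm_add_le (Complex.exp ((α₂:ℝ) * I)
              - Complex.exp ((Real.sqrt 3 : ℂ) * z))
              (Complex.exp ((β₂:ℝ) * I) - Complex.exp ((Real.sqrt 5 : ℂ) * z))
            linarith
        _ < 1/2 * (4 * η + 4 * η) := by linarith
        _ = ε/2 := by rw [hηdef]; ring
        _ < ε := by linarith
    rw [Prod.dist_eq]
    apply max_lt
    · show dist v.1 _ < ε
      rw [Complex.dist_eq]
      simpa [hwz] using comp1
    · show dist v.2 _ < ε
      rw [Complex.dist_eq]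
      simpa [hwz] using comp2
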